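/- Let (H,R) be a finite-dimensional semisimple and cosemisimple quasi-triangular Hopf algebra over a field k, D a minimal H-adjoint-stable subcoalgebra of H_R, and W a finite-dimensional nonzero left D-comodule. Then there is a natural isomorphism of functors Hom_H^D(H⊗W, •) ≅ W* □_D • from _H^D M to vector spaces; concretely, for each V ∈ _H^D M the map f ↦ Σᵢ wᵢ* ⊗ f(1⊗wᵢ) (for a dual basis {wᵢ, wᵢ*} of W) is an isomorphism Hom_H^D(H⊗W, V) → W* □_D V, natural in V. -/

import Mathlib

open TensorProduct LinearMap

variable (K : Type) [Field K] (H : Type) [Ring H] [HopfAlgebra K H]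

/-- The left adjoint action as a linear map `H ⊗ H →ₗ H`, `h ⊗ a ↦ Σ h₍₁₎ * a * S(h₍₂₎)`. -/
noncomputable def adMap : H ⊗[K] H →ₗ[K] H :=
  (LinearMap.mul' K H) ∘ₗ
    (LinearMap.lTensor H ((LinearMap.mul' K H) ∘ₗ
      (LinearMap.lTensor H (HopfAlgebra.antipode (R := K))) ∘ₗ
      (TensorProduct.comm K H H).toLinearMap)) ∘ₗ
    (TensorProduct.assoc K H H H).toLinearMap ∘ₗ
    (LinearMap.rTensor H (Coalgebra.comul (R := K)))

/-- `h ·_ad a = Σ h₍₁₎ a S(h₍₂₎)`. -/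
noncomputable def adAct (h a : H) : H := adMap K H (h ⊗ₜ a)

/-- `R¹² = Σ r¹ ⊗ r² ⊗ 1` in `H ⊗ (H ⊗ H)`. -/
noncomputable def r12 (R : H ⊗[K] H) : H ⊗[K] (H ⊗[K] H) :=
  TensorProduct.map LinearMap.id ((TensorProduct.mk K H H).flip 1) R

/-- `R¹³ = Σ r¹ ⊗ 1 ⊗ r²` in `H ⊗ (H ⊗ H)`. -/
noncomputable def r13 (R : H ⊗[K] H) : H ⊗[K] (H ⊗[K] H) :=
  TensorProduct.map LinearMap.id (TensorProduct.mk K H H 1) R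

/-- `R²³ = 1 ⊗ R` in `H ⊗ (H ⊗ H)`. -/
noncomputable def r23 (R : H ⊗[K] H) : H ⊗[K] (H ⊗[K] H) := (1 : H) ⊗ₜ R

/-- `(H,R)` is a quasi-triangular Hopf algebra: `R` is invertible,
`R Δ(h) = Δᶜᵒᵖ(h) R`, `(Δ⊗id)(R) = R¹³R²³` and `(id⊗Δ)(R) = R¹³R¹²`. -/
structure IsQuasiTriangular (R : H ⊗[K] H) : Prop where
  isUnit : IsUnit R
  intertwine : ∀ h : H, R * Coalgebra.comul h =
    (TensorProduct.comm K H H) (Coalgebra.comul h) * R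
  comul_rTensor : (TensorProduct.assoc K H H H)
      ((LinearMap.rTensor H (Coalgebra.comul (R := K))) R) = r13 K H R * r23 K H R
  comul_lTensor : (LinearMap.lTensor H (Coalgebra.comul (R := K))) R = r13 K H R * r12 K H R

/-- The comultiplication `Δ_R` of the transmuted braided group `H_R`:
`Δ_R(h) = Σ h₍₁₎ S(R²) ⊗ R¹ ·_ad h₍₂₎`. -/
noncomputable def deltaR (R : H ⊗[K] H) : H →ₗ[K] H ⊗[K] H :=
  (TensorProduct.map
      ((LinearMap.mul' K H) ∘ₗ (LinearMap.lTensor H (HopfAlgebra.antipode (R := K))))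
      ((adMap K H) ∘ₗ (TensorProduct.comm K H H).toLinearMap)) ∘ₗ
    (TensorProduct.tensorTensorTensorComm K H H H H).toLinearMap ∘ₗ
    (LinearMap.lTensor (H ⊗[K] H) (TensorProduct.comm K H H).toLinearMap) ∘ₗ
    ((TensorProduct.mk K (H ⊗[K] H) (H ⊗[K] H)).flip R) ∘ₗ
    (Coalgebra.comul (R := K))

/-- A subcoalgebra of `(H, Δ)`. -/
def IsSubcoalgebra (D : Submodule K H) : Prop :=
  ∀ a ∈ D, Coalgebra.comul (R := K) a ∈ Submodule.map₂ (TensorProduct.mk K H H) D D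

/-- A simple (nonzero, minimal) subcoalgebra of `(H, Δ)`. -/
def IsSimpleSubcoalgebra (D : Submodule K H) : Prop :=
  D ≠ ⊥ ∧ IsSubcoalgebra K H D ∧
    ∀ D' : Submodule K H, D' ≤ D → IsSubcoalgebra K H D' → D' = ⊥ ∨ D' = D

/-- `H` is a cosemisimple coalgebra: the sum of its simple subcoalgebras is everything. -/
def IsCosemisimpleCoalgebra : Prop :=
  sSup {D : Submodule K H | IsSimpleSubcoalgebra K H D} = ⊤

/-- A subcoalgebra of the transmuted braided group `(H, Δ_R)`. -/
def IsSubcoalgebraR (R : H ⊗[K] H) (D : Submodule K H) : Prop :=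
  ∀ a ∈ D, deltaR K H R a ∈ Submodule.map₂ (TensorProduct.mk K H H) D D

/-- A simple (nonzero, minimal) subcoalgebra of `(H, Δ_R)`. -/
def IsSimpleSubcoalgebraR (R : H ⊗[K] H) (D : Submodule K H) : Prop :=
  D ≠ ⊥ ∧ IsSubcoalgebraR K H R D ∧
    ∀ D' : Submodule K H, D' ≤ D → IsSubcoalgebraR K H R D' → D' = ⊥ ∨ D' = D

/-- The coalgebra `(H, Δ_R)` is cosemisimple: it is the sum of its simple subcoalgebras. -/
def IsCosemisimpleR (R : H ⊗[K] H) : Prop :=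
  sSup {D : Submodule K H | IsSimpleSubcoalgebraR K H R D} = ⊤

/-- A Yetter–Drinfeld submodule of `H` (with the adjoint action and the coproduct):
a subspace stable under `·_ad` and a left subcomodule for `Δ`, i.e. `Δ(D) ⊆ H ⊗ D`. -/
def IsYDSubmodule (D : Submodule K H) : Prop :=
  (∀ (h : H), ∀ a ∈ D, adAct K H h a ∈ D) ∧
  (∀ a ∈ D, Coalgebra.comul (R := K) a ∈ Submodule.map₂ (TensorProduct.mk K H H) ⊤ D)

/-- A minimal (irreducible) Yetter–Drinfeld submodule of `H`. -/
def IsMinimalYDSubmodule (D : Submodule K H) : Prop :=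
  D ≠ ⊥ ∧ IsYDSubmodule K H D ∧
    ∀ D' : Submodule K H, D' ≤ D → IsYDSubmodule K H D' → D' = ⊥ ∨ D' = D

/-- An `H`-adjoint-stable subcoalgebra of the transmuted braided group `H_R`:
a subcoalgebra of `(H, Δ_R)` which is stable under the left adjoint action. -/
def IsAdjointStableSubcoalgebra (R : H ⊗[K] H) (D : Submodule K H) : Prop :=
  (∀ (h : H), ∀ a ∈ D, adAct K H h a ∈ D) ∧
  (∀ a ∈ D, deltaR K H R a ∈ Submodule.map₂ (TensorProduct.mk K H H) D D)

/-- A minimal (nonzero) `H`-adjoint-stable subcoalgebra of `H_R`. -/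
def IsMinimalAdjointStableSubcoalgebra (R : H ⊗[K] H) (D : Submodule K H) : Prop :=
  D ≠ ⊥ ∧ IsAdjointStableSubcoalgebra K H R D ∧
    ∀ D' : Submodule K H, D' ≤ D → IsAdjointStableSubcoalgebra K H R D' → D' = ⊥ ∨ D' = D

/-- An object of `_H^{H_R}M`: a left `H`-module `V` together with a left comodule
structure `ρ_R` over the transmuted braided group `(H, Δ_R)`, satisfying the
compatibility `ρ_R(hv) = Σ h₍₁₎ ·_ad v⁽⁻¹⁾ ⊗ h₍₂₎ v⁽⁰⁾`.  By Zhu's lemma, this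
category is the Yetter–Drinfeld category `_H^H YD`. -/
structure RModStr (R : H ⊗[K] H) (V : Type*) [AddCommGroup V] [Module K V] where
  act : H →ₐ[K] Module.End K V
  coact : V →ₗ[K] H ⊗[K] V
  counit_coact : ∀ v : V,
    (TensorProduct.lid K V)
      ((LinearMap.rTensor V (Coalgebra.counit (R := K))) (coact v)) = v
  coassocR : (LinearMap.rTensor V (deltaR K H R)) ∘ₗ coact
      = (TensorProduct.assoc K H H V).symm.toLinearMap ∘ₗ
        (LinearMap.lTensor H coact) ∘ₗ coact
  compat : coact ∘ₗ (TensorProduct.lift act.toLinearMap)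
      = (TensorProduct.map (adMap K H) (TensorProduct.lift act.toLinearMap)) ∘ₗ
        (TensorProduct.tensorTensorTensorComm K H H H V).toLinearMap ∘ₗ
        (TensorProduct.map (Coalgebra.comul (R := K)) coact)

/-- The object lies in the subcategory `_H^D M`: its coaction takes values in `D ⊗ V`. -/
def memDCat (R : H ⊗[K] H) (D : Submodule K H) {V : Type*} [AddCommGroup V]
    [Module K V] (s : RModStr K H R V) : Prop :=
  ∀ v : V, s.coact v ∈ Submodule.map₂ (TensorProduct.mk K H V) D ⊤

/-- Irreducibility of an object of `_H^{H_R}M = _H^H YD`: it is nonzero and has no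
nontrivial subspace stable under the action and the coaction. -/
def RModIrreducible (R : H ⊗[K] H) {V : Type*} [AddCommGroup V] [Module K V]
    (s : RModStr K H R V) : Prop :=
  (⊥ : Submodule K V) ≠ ⊤ ∧
    ∀ W : Submodule K V, (∀ h : H, ∀ w ∈ W, s.act h w ∈ W) →
      (∀ w ∈ W, s.coact w ∈ Submodule.map₂ (TensorProduct.mk K H V) ⊤ W) →
      W = ⊥ ∨ W = ⊤

/-- A left comodule structure over a subcoalgebra `D` of the transmuted braided
group `(H, Δ_R)`. -/
structure DComodStr (R : H ⊗[K] H) (D : Submodule K H) (W : Type*) [AddCommGroup W]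
    [Module K W] where
  coact : W →ₗ[K] H ⊗[K] W
  mem : ∀ w : W, coact w ∈ Submodule.map₂ (TensorProduct.mk K H W) D ⊤
  counit_coact : ∀ w : W,
    (TensorProduct.lid K W)
      ((LinearMap.rTensor W (Coalgebra.counit (R := K))) (coact w)) = w
  coassocR : (LinearMap.rTensor W (deltaR K H R)) ∘ₗ coact
      = (TensorProduct.assoc K H H W).symm.toLinearMap ∘ₗ
        (LinearMap.lTensor H coact) ∘ₗ coact

/-- The coaction `ρ_R(h ⊗ w) = Σ h₍₁₎ ·_ad w₍₋₁₎ ⊗ (h₍₂₎ ⊗ w₍₀₎)` on `H ⊗ W`. -/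
noncomputable def rhoHW (R : H ⊗[K] H) {D : Submodule K H} {W : Type*} [AddCommGroup W]
    [Module K W] (sW : DComodStr K H R D W) :
    H ⊗[K] W →ₗ[K] H ⊗[K] (H ⊗[K] W) :=
  (TensorProduct.map (adMap K H) LinearMap.id) ∘ₗ
    (TensorProduct.tensorTensorTensorComm K H H H W).toLinearMap ∘ₗ
    (TensorProduct.map (Coalgebra.comul (R := K)) sW.coact)

/-- The cotensor product `X □ Y ⊆ X ⊗ Y` of a right `H`-comodule `(X, ρX)` and a left
`H`-comodule `(Y, ρY)`. -/
noncomputable def cotensor {X Y : Type*} [AddCommGroup X] [Module K X] [AddCommGroup Y]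
    [Module K Y] (ρX : X →ₗ[K] X ⊗[K] H) (ρY : Y →ₗ[K] H ⊗[K] Y) :
    Submodule K (X ⊗[K] Y) :=
  LinearMap.ker ((TensorProduct.assoc K X H Y).toLinearMap ∘ₗ
    (LinearMap.rTensor Y ρX) - (LinearMap.lTensor X ρY))

/-- `ρ*` is the right comodule structure on `W*` dual to the left comodule structure
`coactW` on `W`:  `Σ ⟨f⁽⁰⁾, w⟩ f⁽¹⁾ = Σ w₍₋₁₎ ⟨f, w₍₀₎⟩`. -/
def IsDualCoaction {W : Type*} [AddCommGroup W] [Module K W]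
    (coactW : W →ₗ[K] H ⊗[K] W)
    (ρstar : Module.Dual K W →ₗ[K] (Module.Dual K W) ⊗[K] H) : Prop :=
  ∀ (f : Module.Dual K W) (w : W),
    (TensorProduct.lid K H) ((LinearMap.rTensor H ((Module.Dual.eval K W) w)) (ρstar f))
      = (TensorProduct.rid K H) ((LinearMap.lTensor H f) (coactW w))

/-- The space `Hom_H^D(V₁, V₂)` of maps which are simultaneously left `H`-module and
left comodule morphisms. -/
def homHD (R : H ⊗[K] H) {V₁ V₂ : Type*} [AddCommGroup V₁] [Module K V₁]
    [AddCommGroup V₂] [Module K V₂] (s : RModStr K H R V₁) (t : RModStr K H R V₂) :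
    Submodule K (V₁ →ₗ[K] V₂) where
  carrier := {f | (∀ h : H, (t.act h : V₂ →ₗ[K] V₂) ∘ₗ f = f ∘ₗ (s.act h : V₁ →ₗ[K] V₁)) ∧
    (LinearMap.lTensor H f) ∘ₗ s.coact = t.coact ∘ₗ f}
  add_mem' := by
    rintro f g ⟨hf1, hf2⟩ ⟨hg1, hg2⟩
    refine ⟨fun h => ?_, ?_⟩
    · rw [LinearMap.comp_add, LinearMap.add_comp, hf1 h, hg1 h]
    · rw [LinearMap.lTensor_add, LinearMap.add_comp, LinearMap.comp_add, hf2, hg2]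
  zero_mem' := by
    refine ⟨fun h => ?_, ?_⟩ <;> simp
  smul_mem' := by
    rintro c f ⟨hf1, hf2⟩
    refine ⟨fun h => ?_, ?_⟩
    · rw [LinearMap.comp_smul, LinearMap.smul_comp, hf1 h]
    · rw [LinearMap.lTensor_smul, LinearMap.smul_comp, LinearMap.comp_smul, hf2]

/-- The algebra `Hom_H^D(V, V)` of endomorphisms of `V` which are simultaneously left
`H`-module and left comodule morphisms. -/
def endHD (R : H ⊗[K] H) {V : Type*} [AddCommGroup V] [Module K V]
    (s : RModStr K H R V) : Subalgebra K (Module.End K V) where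
  carrier := {f | (∀ h : H, (s.act h : V →ₗ[K] V) ∘ₗ f = f ∘ₗ (s.act h : V →ₗ[K] V)) ∧
    (LinearMap.lTensor H f) ∘ₗ s.coact = s.coact ∘ₗ f}
  add_mem' := by
    rintro f g ⟨hf1, hf2⟩ ⟨hg1, hg2⟩
    refine ⟨fun h => ?_, ?_⟩
    · rw [LinearMap.comp_add, LinearMap.add_comp, hf1 h, hg1 h]
    · rw [LinearMap.lTensor_add, LinearMap.add_comp, LinearMap.comp_add, hf2, hg2]
  mul_mem' := by
    rintro f g ⟨hf1, hf2⟩ ⟨hg1, hg2⟩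
    refine ⟨fun h => ?_, ?_⟩
    · show (s.act h : V →ₗ[K] V) ∘ₗ (f ∘ₗ g) = (f ∘ₗ g) ∘ₗ (s.act h : V →ₗ[K] V)
      rw [← LinearMap.comp_assoc, hf1 h, LinearMap.comp_assoc, hg1 h, LinearMap.comp_assoc]
    · show (LinearMap.lTensor H (f ∘ₗ g)) ∘ₗ s.coact = s.coact ∘ₗ (f ∘ₗ g)
      rw [LinearMap.lTensor_comp, LinearMap.comp_assoc, hg2, ← LinearMap.comp_assoc, hf2,
        LinearMap.comp_assoc]
  algebraMap_mem' := by
    intro c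
    refine ⟨fun h => ?_, ?_⟩
    · ext v
      simp [Module.algebraMap_end_apply]
    · ext v
      have : ((algebraMap K (Module.End K V)) c) = c • (LinearMap.id (M := V)) := by
        ext w; simp [Module.algebraMap_end_apply]
      simp [this, Module.algebraMap_end_apply]

/-- The canonical element `Σᵢ wᵢ* ⊗ (1_H ⊗ wᵢ) ∈ W* ⊗ (H ⊗ W)` (for a dual basis
`{wᵢ, wᵢ*}` of the finite dimensional space `W`). -/
noncomputable def coevHW (W : Type*) [AddCommGroup W] [Module K W]
    [FiniteDimensional K W] : (Module.Dual K W) ⊗[K] (H ⊗[K] W) :=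
  (LinearMap.lTensor (Module.Dual K W) ((TensorProduct.mk K H W) 1))
    ((TensorProduct.comm K W (Module.Dual K W)) ((coevaluation K W) 1))

/-- `f ↦ Σᵢ wᵢ* ⊗ f(1 ⊗ wᵢ)`, the canonical map from maps out of `H ⊗ W` to `W* ⊗ V`. -/
noncomputable def muW {W : Type*} [AddCommGroup W] [Module K W] [FiniteDimensional K W]
    {V : Type*} [AddCommGroup V] [Module K V] (f : H ⊗[K] W →ₗ[K] V) :
    (Module.Dual K W) ⊗[K] V :=
  (LinearMap.lTensor (Module.Dual K W) f) (coevHW K H W)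

section AuxLemmas

variable {W V V₂ : Type*} [AddCommGroup W] [Module K W]
  [AddCommGroup V] [Module K V] [AddCommGroup V₂] [Module K V₂]

lemma dth_reconstruct [FiniteDimensional K W] (g : W →ₗ[K] V) :
    dualTensorHom K W V (∑ i, (Module.Basis.ofVectorSpace K W).coord i ⊗ₜ[K]
        g ((Module.Basis.ofVectorSpace K W) i)) = g := by
  ext w
  simp only [map_sum, LinearMap.sum_apply, dualTensorHom_apply]
  calc ∑ i, (Module.Basis.ofVectorSpace K W).coord i w • g ((Module.Basis.ofVectorSpace K W) i)
      = g (∑ i, (Module.Basis.ofVectorSpace K W).coord i w • (Module.Basis.ofVectorSpace K W) i) := by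
        rw [map_sum]; simp only [map_smul]
    _ = g w := by
        congr 1
        simp only [Module.Basis.coord_apply]
        exact (Module.Basis.ofVectorSpace K W).sum_repr w

lemma reconstruct_eq [FiniteDimensional K W] (y : Module.Dual K W ⊗[K] V) :
    ∑ i, (Module.Basis.ofVectorSpace K W).coord i ⊗ₜ[K]
      dualTensorHom K W V y ((Module.Basis.ofVectorSpace K W) i) = y := by
  induction y using TensorProduct.induction_on with
  | zero => simp
  | tmul φ v =>
    have h : ∀ i : Module.Basis.ofVectorSpaceIndex K W,
        (Module.Basis.ofVectorSpace K W).coord i ⊗ₜ[K]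
          (dualTensorHom K W V (φ ⊗ₜ v)) ((Module.Basis.ofVectorSpace K W) i)
        = (φ ((Module.Basis.ofVectorSpace K W) i) • (Module.Basis.ofVectorSpace K W).coord i) ⊗ₜ[K] v := by
      intro i
      rw [dualTensorHom_apply, tmul_smul, smul_tmul']
    rw [Finset.sum_congr rfl fun i _ => h i, ← TensorProduct.sum_tmul,
      Module.Basis.sum_dual_apply_smul_coord]
  | add y₁ y₂ h₁ h₂ =>
    simp only [map_add, LinearMap.add_apply, TensorProduct.tmul_add,
      Finset.sum_add_distrib, h₁, h₂]

lemma dth_injective [FiniteDimensional K W] {y y' : Module.Dual K W ⊗[K] V}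
    (h : dualTensorHom K W V y = dualTensorHom K W V y') : y = y' := by
  rw [← reconstruct_eq K y, ← reconstruct_eq K y', h]

lemma dth_lTensor (g : V →ₗ[K] V₂) (y : Module.Dual K W ⊗[K] V) :
    dualTensorHom K W V₂ (LinearMap.lTensor (Module.Dual K W) g y)
      = g ∘ₗ dualTensorHom K W V y := by
  induction y using TensorProduct.induction_on with
  | zero => simp
  | tmul φ v => ext w; simp
  | add y₁ y₂ h₁ h₂ => simp only [map_add]; rw [h₁, h₂]; ext w; simp

lemma dth_assoc_apply (x : Module.Dual K W ⊗[K] H) (v : V) (w : W) :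
    dualTensorHom K W (H ⊗[K] V) ((TensorProduct.assoc K (Module.Dual K W) H V) (x ⊗ₜ v)) w
      = (TensorProduct.lid K H) ((LinearMap.rTensor H ((Module.Dual.eval K W) w)) x) ⊗ₜ[K] v := by
  induction x using TensorProduct.induction_on with
  | zero =>
    rw [TensorProduct.zero_tmul, LinearEquiv.map_zero, map_zero, map_zero, LinearEquiv.map_zero,
      TensorProduct.zero_tmul, LinearMap.zero_apply]
  | tmul φ h => simp [smul_tmul']
  | add x₁ x₂ h₁ h₂ =>
    simp only [TensorProduct.add_tmul, map_add, LinearMap.add_apply, h₁, h₂,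
      TensorProduct.add_tmul]

lemma lTensor_dth_apply (φ : Module.Dual K W) (v : V) (z : H ⊗[K] W) :
    (LinearMap.lTensor H (dualTensorHom K W V (φ ⊗ₜ v))) z
      = (TensorProduct.rid K H) ((LinearMap.lTensor H φ) z) ⊗ₜ[K] v := by
  induction z using TensorProduct.induction_on with
  | zero => simp
  | tmul d w' => simp [smul_tmul']
  | add z₁ z₂ h₁ h₂ => simp only [map_add, TensorProduct.add_tmul, h₁, h₂]

lemma bridging (coactW : W →ₗ[K] H ⊗[K] W)
    (ρstar : Module.Dual K W →ₗ[K] Module.Dual K W ⊗[K] H)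
    (hρ : IsDualCoaction K H coactW ρstar) (y : Module.Dual K W ⊗[K] V) :
    dualTensorHom K W (H ⊗[K] V)
        ((TensorProduct.assoc K (Module.Dual K W) H V) ((LinearMap.rTensor V ρstar) y))
      = (LinearMap.lTensor H (dualTensorHom K W V y)) ∘ₗ coactW := by
  induction y using TensorProduct.induction_on with
  | zero => ext w; simp
  | tmul φ v =>
    ext w
    rw [LinearMap.rTensor_tmul, dth_assoc_apply, LinearMap.comp_apply,
      lTensor_dth_apply, hρ φ w]
  | add y₁ y₂ h₁ h₂ =>
    simp only [map_add, LinearMap.lTensor_add, LinearMap.add_comp, h₁, h₂]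

lemma muW_eq [FiniteDimensional K W] (f : H ⊗[K] W →ₗ[K] V) :
    muW K H f = ∑ i, (Module.Basis.ofVectorSpace K W).coord i ⊗ₜ[K]
      f ((1 : H) ⊗ₜ (Module.Basis.ofVectorSpace K W) i) := by
  rw [muW, coevHW, coevaluation_apply_one]
  simp only [map_sum, TensorProduct.comm_tmul, LinearMap.lTensor_tmul,
    TensorProduct.mk_apply]

lemma dth_muW [FiniteDimensional K W] (f : H ⊗[K] W →ₗ[K] V) :
    dualTensorHom K W V (muW K H f) = f ∘ₗ ((TensorProduct.mk K H W) 1) := by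
  rw [muW_eq]
  exact dth_reconstruct K (f ∘ₗ (TensorProduct.mk K H W) 1)

lemma antipode_one_eq : (HopfAlgebra.antipode (R := K) (A := H)) 1 = 1 := by
  have h := HopfAlgebra.mul_antipode_rTensor_comul_apply (R := K) (a := (1 : H))
  simpa [Bialgebra.comul_one, Algebra.TensorProduct.one_def] using h

lemma adMap_one_tmul (a : H) : adMap K H ((1 : H) ⊗ₜ a) = a := by
  rw [adMap]
  simp [Bialgebra.comul_one, Algebra.TensorProduct.one_def, antipode_one_eq]

lemma rhoHW_one_tmul (R : H ⊗[K] H) {D : Submodule K H} (sW : DComodStr K H R D W) (w : W) :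
    rhoHW K H R sW ((1 : H) ⊗ₜ w)
      = (LinearMap.lTensor H ((TensorProduct.mk K H W) 1)) (sW.coact w) := by
  rw [rhoHW]
  simp only [LinearMap.coe_comp, Function.comp_apply, LinearEquiv.coe_coe,
    TensorProduct.map_tmul, Bialgebra.comul_one, Algebra.TensorProduct.one_def]
  generalize sW.coact w = z
  induction z using TensorProduct.induction_on with
  | zero => simp
  | tmul d w' => simp [TensorProduct.tensorTensorTensorComm_tmul, adMap_one_tmul]
  | add z₁ z₂ h₁ h₂ => simp only [TensorProduct.tmul_add, map_add, h₁, h₂]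

lemma key_comod_calc (act : H →ₐ[K] Module.End K V) (g : W →ₗ[K] V)
    (x : H ⊗[K] H) (z : H ⊗[K] W) :
    (LinearMap.lTensor H ((TensorProduct.lift act.toLinearMap) ∘ₗ (LinearMap.lTensor H g)))
        ((TensorProduct.map (adMap K H) LinearMap.id)
          ((TensorProduct.tensorTensorTensorComm K H H H W) (x ⊗ₜ z)))
      = (TensorProduct.map (adMap K H) (TensorProduct.lift act.toLinearMap))
          ((TensorProduct.tensorTensorTensorComm K H H H V)
            (x ⊗ₜ (LinearMap.lTensor H g z))) := by
  induction x using TensorProduct.induction_on with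
  | zero => simp
  | tmul a b =>
    induction z using TensorProduct.induction_on with
    | zero => simp
    | tmul c d => simp [TensorProduct.tensorTensorTensorComm_tmul]
    | add z₁ z₂ h₁ h₂ => simp only [map_add, TensorProduct.tmul_add, h₁, h₂]
  | add x₁ x₂ h₁ h₂ => simp only [map_add, TensorProduct.add_tmul, h₁, h₂]

lemma mem_homHD (R : H ⊗[K] H) {V₁ V₂ : Type*} [AddCommGroup V₁] [Module K V₁]
    [AddCommGroup V₂] [Module K V₂] (s : RModStr K H R V₁) (t : RModStr K H R V₂)
    (f : V₁ →ₗ[K] V₂) :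
    f ∈ homHD K H R s t ↔
      (∀ h : H, (t.act h : V₂ →ₗ[K] V₂) ∘ₗ f = f ∘ₗ (s.act h : V₁ →ₗ[K] V₁)) ∧
        (LinearMap.lTensor H f) ∘ₗ s.coact = t.coact ∘ₗ f := Iff.rfl

end AuxLemmas

/-- **Statement 12.** Let `(H,R)` be a finite dimensional semisimple and cosemisimple
quasi-triangular Hopf algebra, `D` a minimal `H`-adjoint-stable subcoalgebra of `H_R`
and `W` a finite dimensional nonzero left `D`-comodule.  Then, for each `V ∈ _H^D M`,
the map `f ↦ Σᵢ wᵢ* ⊗ f(1 ⊗ wᵢ)` is an isomorphism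
`Hom_H^D(H ⊗ W, V) → W* □_D V`, natural in `V`. -/
theorem hom_from_HW_iso_cotensor
    [FiniteDimensional K H] (R : H ⊗[K] H) (hR : IsQuasiTriangular K H R)
    (hss : IsSemisimpleRing H) (hcoss : IsCosemisimpleCoalgebra K H)
    (D : Submodule K H) (hD : IsMinimalAdjointStableSubcoalgebra K H R D)
    (W : Type) [AddCommGroup W] [Module K W] [FiniteDimensional K W] [Nontrivial W]
    (sW : DComodStr K H R D W)
    (ρstar : Module.Dual K W →ₗ[K] (Module.Dual K W) ⊗[K] H)
    (hρstar : IsDualCoaction K H sW.coact ρstar)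
    (sHW : RModStr K H R (H ⊗[K] W))
    (hHWact : ∀ h' : H,
      (sHW.act h' : H ⊗[K] W →ₗ[K] H ⊗[K] W) = LinearMap.rTensor W (LinearMap.mulLeft K h'))
    (hHWcoact : sHW.coact = rhoHW K H R sW) :
    -- the map `μ` lands in the cotensor product, is bijective onto it, and is natural
    (∀ (V : Type) [AddCommGroup V] [Module K V]
        (t : RModStr K H R V), memDCat K H R D t →
        (∀ f ∈ homHD K H R sHW t, muW K H f ∈ cotensor K H ρstar t.coact) ∧
        (∀ y ∈ cotensor K H ρstar t.coact,
          ∃! f : H ⊗[K] W →ₗ[K] V, f ∈ homHD K H R sHW t ∧ muW K H f = y)) ∧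
    (∀ (V₁ V₂ : Type) [AddCommGroup V₁] [Module K V₁] [AddCommGroup V₂] [Module K V₂]
        (t₁ : RModStr K H R V₁) (t₂ : RModStr K H R V₂),
        memDCat K H R D t₁ → memDCat K H R D t₂ →
        ∀ α ∈ homHD K H R t₁ t₂, ∀ f ∈ homHD K H R sHW t₁,
          muW K H (α ∘ₗ f) = (LinearMap.lTensor (Module.Dual K W) α) (muW K H f)) := by
  constructor
  · intro V _ _ t _
    constructor
    · intro f hfmem
      obtain ⟨hfact, hfco⟩ := (mem_homHD K H R sHW t f).mp hfmem
      rw [cotensor, LinearMap.mem_ker]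
      show (TensorProduct.assoc K (Module.Dual K W) H V)
          ((LinearMap.rTensor V ρstar) (muW K H f))
        - (LinearMap.lTensor (Module.Dual K W) t.coact) (muW K H f) = 0
      rw [sub_eq_zero]
      apply dth_injective K
      rw [bridging K H (V := V) sW.coact ρstar hρstar, dth_lTensor, dth_muW]
      ext w
      simp only [LinearMap.coe_comp, Function.comp_apply, TensorProduct.mk_apply]
      have h2 := LinearMap.congr_fun hfco ((1 : H) ⊗ₜ[K] w)
      simp only [LinearMap.coe_comp, Function.comp_apply] at h2
      rw [← h2, hHWcoact, rhoHW_one_tmul, ← LinearMap.lTensor_comp_apply]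
    · intro y hy
      have hy' : (TensorProduct.assoc K (Module.Dual K W) H V) ((LinearMap.rTensor V ρstar) y)
          = (LinearMap.lTensor (Module.Dual K W) t.coact) y := by
        rw [cotensor, LinearMap.mem_ker] at hy
        exact sub_eq_zero.mp hy
      set g : W →ₗ[K] V := dualTensorHom K W V y with hg
      have hkey : (LinearMap.lTensor H g) ∘ₗ sW.coact = t.coact ∘ₗ g := by
        have h1 := bridging K H (V := V) sW.coact ρstar hρstar y
        rw [hy', dth_lTensor] at h1
        exact h1.symm
      set f : H ⊗[K] W →ₗ[K] V :=
        (TensorProduct.lift t.act.toLinearMap) ∘ₗ (LinearMap.lTensor H g) with hf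
      have hf1 : ∀ (h : H) (w : W),
          f (h ⊗ₜ[K] w) = (TensorProduct.lift t.act.toLinearMap) (h ⊗ₜ[K] g w) := by
        intro h w
        simp only [hf, LinearMap.coe_comp, Function.comp_apply, LinearMap.lTensor_tmul]
      have hfone : ∀ w : W, f ((1 : H) ⊗ₜ[K] w) = g w := by
        intro w
        rw [hf1, TensorProduct.lift.tmul]
        simp
      have hm : ∀ h : H,
          (t.act h : V →ₗ[K] V) ∘ₗ f
            = f ∘ₗ (sHW.act h : H ⊗[K] W →ₗ[K] H ⊗[K] W) := by
        intro h'
        apply TensorProduct.ext'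
        intro h w
        simp only [LinearMap.coe_comp, Function.comp_apply, hHWact, LinearMap.rTensor_tmul,
          LinearMap.mulLeft_apply, hf1, TensorProduct.lift.tmul, AlgHom.toLinearMap_apply,
          map_mul, Module.End.mul_apply]
      have hc : (LinearMap.lTensor H f) ∘ₗ sHW.coact = t.coact ∘ₗ f := by
        apply TensorProduct.ext'
        intro h w
        have compat := LinearMap.congr_fun t.compat (h ⊗ₜ[K] (g w))
        simp only [LinearMap.coe_comp, Function.comp_apply, LinearEquiv.coe_coe,
          TensorProduct.map_tmul] at compat
        have hgw : t.coact (g w) = (LinearMap.lTensor H g) (sW.coact w) :=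
          (LinearMap.congr_fun hkey w).symm
        simp only [LinearMap.coe_comp, Function.comp_apply, hHWcoact, rhoHW,
          LinearEquiv.coe_coe, TensorProduct.map_tmul]
        rw [hf1, compat, hgw, hf]
        exact key_comod_calc K H t.act g (Coalgebra.comul h) (sW.coact w)
      have hμ : muW K H f = y := by
        rw [muW_eq]
        have he : ∀ i : Module.Basis.ofVectorSpaceIndex K W,
            f ((1 : H) ⊗ₜ[K] (Module.Basis.ofVectorSpace K W) i)
              = g ((Module.Basis.ofVectorSpace K W) i) := fun i => hfone _
        simp only [he]
        rw [hg]
        exact reconstruct_eq K y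
      refine ⟨f, ⟨(mem_homHD K H R sHW t f).mpr ⟨hm, hc⟩, hμ⟩, ?_⟩
      rintro f' ⟨hf'mem, hf'μ⟩
      obtain ⟨h'a, h'c⟩ := (mem_homHD K H R sHW t f').mp hf'mem
      have hone : f' ∘ₗ ((TensorProduct.mk K H W) 1) = g := by
        rw [hg, ← dth_muW, hf'μ]
      apply TensorProduct.ext'
      intro h w
      have e1 : sHW.act h ((1 : H) ⊗ₜ[K] w) = h ⊗ₜ[K] w := by
        rw [hHWact]
        simp
      calc f' (h ⊗ₜ[K] w) = f' (sHW.act h ((1 : H) ⊗ₜ[K] w)) := by rw [e1]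
        _ = t.act h (f' ((1 : H) ⊗ₜ[K] w)) := (LinearMap.congr_fun (h'a h) _).symm
        _ = t.act h (g w) := by
              rw [show f' ((1 : H) ⊗ₜ[K] w) = g w from LinearMap.congr_fun hone w]
        _ = t.act h (f ((1 : H) ⊗ₜ[K] w)) := by rw [hfone]
        _ = f (sHW.act h ((1 : H) ⊗ₜ[K] w)) := LinearMap.congr_fun (hm h) _
        _ = f (h ⊗ₜ[K] w) := by rw [e1]
  · intro V₁ V₂ _ _ _ _ t₁ t₂ _ _ α hα f hf
    rw [muW, muW, LinearMap.lTensor_comp, LinearMap.coe_comp, Function.comp_apply]
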